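/- If model B is ergodic with unique invariant measure δ_{∘^ℤ} (i.e., νF_B^n converges weakly to δ_{∘^ℤ} for every probability measure ν on {∘,•}^ℤ), then the PCA F_A has (δ_{(01)^ℤ} + δ_{(10)^ℤ})/2 as its unique invariant probability measure. (Part of Lemma 4.3.) -/

import Mathlib

open MeasureTheory ProbabilityTheory Filter

/-!
Conventions: a configuration of model A is `x : ℤ → Bool` (`false` = 0, `true` = 1);
a configuration of model B is `y : ℤ → Bool` (`false` = ∘, `true` = •);
an update configuration is `u : ℤ → Bool` (`true` = ↑, `false` = →).
The space `ℤ → Bool` carries the product topology (with `Bool` discrete) and the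
product (Borel) σ-algebra.
-/

/-- The local map `𝒜` of model A. -/
def modelA (x u : ℤ → Bool) : ℤ → Bool := fun i =>
  if x (i - 1) = x i then xor (x i) (u i) else x (i - 1)

/-- The local map `ℬ` of model B: the `i`-th coordinate of `ℬ(y,u)` is `•` iff
`(y_{i-1}y_i, u_{i-1}u_i) ∈ {(•∘, →⋅), (∘•, ⋅↑), (••, ↑↑), (••, →→)}`. -/
def modelB (y u : ℤ → Bool) : ℤ → Bool := fun i =>
  match y (i - 1), y i with
  | true, false => !u (i - 1)
  | false, true => u i
  | true, true => u (i - 1) == u i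
  | false, false => false

/-- `lam` is the product over `ℤ` of the uniform measure on the two-element update
alphabet `𝒰`. -/
def IsUniformProduct (lam : Measure (ℤ → Bool)) : Prop :=
  IsProbabilityMeasure lam ∧
    ∀ (s : Finset ℤ) (f : ℤ → Bool),
      lam {u | ∀ i ∈ s, u i = f i} = (1 / 2 : ENNReal) ^ s.card

/-- `μ F_A`: the pushforward of `μ ⊗ lam` under `𝒜`. -/
noncomputable def FA (lam μ : Measure (ℤ → Bool)) : Measure (ℤ → Bool) :=
  Measure.map (fun p : (ℤ → Bool) × (ℤ → Bool) => modelA p.1 p.2) (μ.prod lam)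

/-- `ν F_B`: the pushforward of `ν ⊗ lam` under `ℬ`. -/
noncomputable def FB (lam ν : Measure (ℤ → Bool)) : Measure (ℤ → Bool) :=
  Measure.map (fun p : (ℤ → Bool) × (ℤ → Bool) => modelB p.1 p.2) (ν.prod lam)

/-- The empty configuration `∘^ℤ`. -/
def emptyConfig : ℤ → Bool := fun _ => false

/-- The configuration `(01)^ℤ`: `x_{2n} = 0`, `x_{2n+1} = 1`. -/
def conf01 : ℤ → Bool := fun i => decide (i % 2 = 1)

/-- The configuration `(10)^ℤ`: `x_{2n} = 1`, `x_{2n+1} = 0`. -/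
def conf10 : ℤ → Bool := fun i => decide (i % 2 = 0)

/-! ### Auxiliary material -/

/-- The defect map: `φ(x)_i = •` iff `x_{i-1} = x_i`. -/
def phiDef (x : ℤ → Bool) : ℤ → Bool := fun i => x (i - 1) == x i

lemma phiDef_modelA (x u : ℤ → Bool) : phiDef (modelA x u) = modelB (phiDef x) u := by
  funext i
  simp only [phiDef, modelA, modelB]
  cases h1 : x (i-1-1) <;> cases h2 : x (i-1) <;> cases h3 : x i <;>
    cases h4 : u (i-1) <;> cases h5 : u i <;> simp [h1, h2, h3, h4, h5]

lemma measurable_mA : Measurable (fun p : (ℤ → Bool) × (ℤ → Bool) => modelA p.1 p.2) := by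
  unfold modelA
  apply measurable_pi_lambda
  intro i
  exact (measurable_of_countable (fun t : Bool × Bool × Bool =>
    if t.1 = t.2.1 then xor t.2.1 t.2.2 else t.1)).comp (by fun_prop :
      Measurable (fun p : (ℤ → Bool) × (ℤ → Bool) => (p.1 (i-1), p.1 i, p.2 i)))

lemma measurable_mB : Measurable (fun p : (ℤ → Bool) × (ℤ → Bool) => modelB p.1 p.2) := by
  unfold modelB
  apply measurable_pi_lambda
  intro i
  exact (measurable_of_countable (fun t : Bool × Bool × Bool × Bool =>
    match t.1, t.2.1 with
    | true, false => !t.2.2.1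
    | false, true => t.2.2.2
    | true, true => t.2.2.1 == t.2.2.2
    | false, false => false)).comp (by fun_prop :
      Measurable (fun p : (ℤ → Bool) × (ℤ → Bool) => (p.1 (i-1), p.1 i, p.2 (i-1), p.2 i)))

lemma measurable_phiDef : Measurable phiDef := by unfold phiDef; fun_prop

lemma modelA_conf01 (u : ℤ → Bool) : modelA conf01 u = conf10 := by
  funext i
  simp only [modelA, conf01, conf10]
  by_cases hi : i % 2 = 1
  · have h1 : ¬((i-1) % 2 = 1) := by omega
    have h0 : ¬(i % 2 = 0) := by omega
    simp [hi, h1, h0]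
  · have h1 : (i-1) % 2 = 1 := by omega
    have h0 : i % 2 = 0 := by omega
    simp [hi, h1, h0]

lemma modelA_conf10 (u : ℤ → Bool) : modelA conf10 u = conf01 := by
  funext i
  simp only [modelA, conf01, conf10]
  by_cases hi : i % 2 = 0
  · have h1 : ¬((i-1) % 2 = 0) := by omega
    have h0 : ¬(i % 2 = 1) := by omega
    simp [hi, h1, h0]
  · have h1 : (i-1) % 2 = 0 := by omega
    have h0 : i % 2 = 1 := by omega
    simp [hi, h1, h0]

lemma conf01_ne_conf10 : conf01 ≠ conf10 := by
  intro h
  have := congrFun h 0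
  simp [conf01, conf10] at this

lemma xor_parity (b : Bool) {a c : ℤ} (h : a % 2 = 1 ↔ ¬(c % 2 = 1)) :
    (!(xor b (decide (a % 2 = 1)))) = xor b (decide (c % 2 = 1)) := by
  by_cases ha : a % 2 = 1
  · rw [decide_eq_true ha, decide_eq_false (h.mp ha)]; cases b <;> rfl
  · have hc : c % 2 = 1 := by by_contra hc; exact ha (h.mpr hc)
    rw [decide_eq_false ha, decide_eq_true hc]; cases b <;> rfl

/-- Classification of alternating configurations. -/
lemma alternating_class (x : ℤ → Bool) (h : ∀ i : ℤ, x (i - 1) ≠ x i) :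
    x = conf01 ∨ x = conf10 := by
  have key : ∀ i : ℤ, x i = xor (x 0) (decide (i % 2 = 1)) := by
    intro i
    induction i using Int.induction_on with
    | zero => simp
    | succ k ih =>
      have hne := h ((k : ℤ) + 1)
      rw [show (k : ℤ) + 1 - 1 = k by ring] at hne
      have hflip : x ((k : ℤ) + 1) = !(x k) := by
        revert hne; cases x k <;> cases x ((k : ℤ) + 1) <;> simp
      rw [hflip, ih]
      apply xor_parity (x 0)
      omega
    | pred k ih =>
      have hgoal : -(k : ℤ) - 1 = -((k : ℤ) + 1) := by ring
      rw [hgoal]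
      have hne := h (-(k : ℤ))
      rw [show -(k : ℤ) - 1 = -((k : ℤ) + 1) by ring] at hne
      have hflip : x (-((k : ℤ) + 1)) = !(x (-(k : ℤ))) := by
        revert hne; cases x (-(k : ℤ)) <;> cases x (-((k : ℤ) + 1)) <;> simp
      rw [hflip, ih]
      apply xor_parity (x 0)
      omega
  cases hb : x 0
  · left
    funext i
    rw [key i, hb, conf01]
    simp
  · right
    funext i
    rw [key i, hb, conf10]
    by_cases hi : i % 2 = 1
    · have : ¬(i % 2 = 0) := by omega
      simp [hi, this]
    · have : i % 2 = 0 := by omega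
      simp [hi, this]

lemma smul_prod_meas {α β : Type*} [MeasurableSpace α] [MeasurableSpace β]
    (c : ENNReal) (μ : Measure α) (ν : Measure β) [SFinite μ] [SFinite ν] :
    (c • μ).prod ν = c • μ.prod ν := by
  ext s hs
  rw [Measure.prod_apply hs, Measure.smul_apply, Measure.prod_apply hs,
    lintegral_smul_measure]

/-- A finite measure is determined by integrals of bounded continuous functions. -/
lemma eq_of_forall_integral_eq {Ω : Type*} [MeasurableSpace Ω] [TopologicalSpace Ω]
    [HasOuterApproxClosed Ω] [BorelSpace Ω] (ν ρ : Measure Ω)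
    [IsFiniteMeasure ν] [IsFiniteMeasure ρ]
    (h : ∀ f : BoundedContinuousFunction Ω ℝ, ∫ x, f x ∂ν = ∫ x, f x ∂ρ) : ν = ρ := by
  let ν' : FiniteMeasure Ω := ⟨ν, inferInstance⟩
  let ρ' : FiniteMeasure Ω := ⟨ρ, inferInstance⟩
  have ht : Tendsto (fun _ : ℕ => ν') atTop (nhds ρ') := by
    apply FiniteMeasure.tendsto_of_forall_integral_tendsto
    intro f
    have : ∫ x, f x ∂(ν' : Measure Ω) = ∫ x, f x ∂(ρ' : Measure Ω) := h f
    rw [show (fun _ : ℕ => ∫ x, f x ∂(ν' : Measure Ω)) = fun _ : ℕ => ∫ x, f x ∂(ρ' : Measure Ω)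
      from funext fun _ => this]
    exact tendsto_const_nhds
  have heq : ν' = ρ' := tendsto_nhds_unique tendsto_const_nhds ht
  exact congrArg FiniteMeasure.toMeasure heq

/-- part of Lemma 4.3: if model B is ergodic with unique invariant
measure `δ_{∘^ℤ}` (i.e. `ν F_B^n` converges weakly to `δ_{∘^ℤ}` for every probability
measure `ν`), then `(δ_{(01)^ℤ} + δ_{(10)^ℤ})/2` is the unique invariant probability
measure of the PCA `F_A`. -/
theorem modelB_ergodic_implies_modelA_unique_invariant (lam : Measure (ℤ → Bool))
    (hlam : IsUniformProduct lam)
    (hB : ∀ ν : Measure (ℤ → Bool), IsProbabilityMeasure ν →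
      ∀ f : BoundedContinuousFunction (ℤ → Bool) ℝ,
        Tendsto (fun n : ℕ => ∫ x, f x ∂((FB lam)^[n] ν)) atTop
          (nhds (∫ x, f x ∂(Measure.dirac emptyConfig)))) :
    FA lam ((1 / 2 : ENNReal) • (Measure.dirac conf01 + Measure.dirac conf10)) =
      (1 / 2 : ENNReal) • (Measure.dirac conf01 + Measure.dirac conf10) ∧
    (∀ ν : Measure (ℤ → Bool), IsProbabilityMeasure ν → FA lam ν = ν →
      ν = (1 / 2 : ENNReal) • (Measure.dirac conf01 + Measure.dirac conf10)) := by
  obtain ⟨hlamP, -⟩ := hlam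
  have huniv : lam Set.univ = 1 := hlamP.measure_univ
  -- FA of a dirac
  have hFAd : ∀ (x y : ℤ → Bool), (∀ u, modelA x u = y) →
      FA lam (Measure.dirac x) = Measure.dirac y := by
    intro x y hxy
    rw [FA, Measure.dirac_prod, Measure.map_map measurable_mA measurable_prodMk_left]
    have : ((fun p : (ℤ → Bool) × (ℤ → Bool) => modelA p.1 p.2) ∘ Prod.mk x)
        = fun _ => y := funext fun u => hxy u
    rw [this, Measure.map_const, huniv, one_smul]
  constructor
  · -- invariance
    rw [FA, smul_prod_meas, Measure.add_prod, Measure.map_smul,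
      Measure.map_add _ _ measurable_mA]
    rw [show Measure.map (fun p : (ℤ → Bool) × (ℤ → Bool) => modelA p.1 p.2)
        ((Measure.dirac conf01).prod lam) = FA lam (Measure.dirac conf01) from rfl,
      show Measure.map (fun p : (ℤ → Bool) × (ℤ → Bool) => modelA p.1 p.2)
        ((Measure.dirac conf10).prod lam) = FA lam (Measure.dirac conf10) from rfl,
      hFAd conf01 conf10 modelA_conf01, hFAd conf10 conf01 modelA_conf10, add_comm]
  · -- uniqueness
    intro μ hμP hμinv
    classical
    -- the defect measure is FB-invariant
    have hcomm : FB lam (Measure.map phiDef μ) = Measure.map phiDef (FA lam μ) := by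
      have hmp : (Measure.map phiDef μ).prod (Measure.map id lam)
          = Measure.map (Prod.map phiDef id) (μ.prod lam) :=
        Measure.map_prod_map μ lam measurable_phiDef measurable_id
      rw [Measure.map_id] at hmp
      rw [FB, hmp, Measure.map_map measurable_mB (measurable_phiDef.prodMap measurable_id)]
      rw [FA, Measure.map_map measurable_phiDef measurable_mA]
      congr 1
      funext p
      exact (phiDef_modelA p.1 p.2).symm
    rw [hμinv] at hcomm
    have hfix : ∀ n : ℕ, (FB lam)^[n] (Measure.map phiDef μ) = Measure.map phiDef μ :=
      Function.iterate_fixed hcomm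
    have hνP : IsProbabilityMeasure (Measure.map phiDef μ) :=
      Measure.isProbabilityMeasure_map measurable_phiDef.aemeasurable
    -- the defect measure equals δ_{∘^ℤ}
    have hδ : Measure.map phiDef μ = Measure.dirac emptyConfig := by
      apply eq_of_forall_integral_eq
      intro f
      have := hB (Measure.map phiDef μ) hνP f
      simp only [hfix] at this
      exact tendsto_nhds_unique tendsto_const_nhds this
    -- μ is concentrated on {conf01, conf10}
    set T : Set (ℤ → Bool) := {conf01, conf10} with hT
    have hTmeas : MeasurableSet T :=
      (measurableSet_singleton conf01).union (measurableSet_singleton conf10)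
    have hTc : μ Tᶜ = 0 := by
      have h0 : μ (phiDef ⁻¹' {emptyConfig}ᶜ) = 0 := by
        have := Measure.map_apply measurable_phiDef
          (measurableSet_singleton emptyConfig).compl (μ := μ)
        rw [hδ] at this
        rw [← this, Measure.dirac_apply' _ (measurableSet_singleton emptyConfig).compl]
        simp
      refine measure_mono_null (fun x hx => ?_) h0
      simp only [Set.mem_preimage, Set.mem_compl_iff, Set.mem_singleton_iff]
      intro hphi
      apply hx
      have halt : ∀ i : ℤ, x (i - 1) ≠ x i := by
        intro i hi
        have := congrFun hphi i
        simp only [phiDef, emptyConfig] at this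
        rw [hi] at this
        simp at this
      rcases alternating_class x halt with h | h <;> simp [hT, h]
    have hTfull : μ T = 1 := by
      have := measure_add_measure_compl (μ := μ) hTmeas
      rw [hTc, add_zero, hμP.measure_univ] at this
      exact this
    -- equal masses on the two points
    have hab : μ {conf01} = μ {conf10} := by
      have h1 : μ {conf01} = (μ.prod lam)
          ((fun p : (ℤ → Bool) × (ℤ → Bool) => modelA p.1 p.2) ⁻¹' {conf01}) := by
        conv_lhs => rw [← hμinv]
        rw [FA, Measure.map_apply measurable_mA (measurableSet_singleton conf01)]
      set S := (fun p : (ℤ → Bool) × (ℤ → Bool) => modelA p.1 p.2) ⁻¹' {conf01} with hS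
      have hclaim : S ∩ (T ×ˢ Set.univ) = {conf10} ×ˢ Set.univ := by
        ext p
        simp only [Set.mem_inter_iff, Set.mem_prod, Set.mem_univ, and_true, hS,
          Set.mem_preimage, Set.mem_singleton_iff, hT, Set.mem_insert_iff]
        constructor
        · rintro ⟨hmod, h01 | h10⟩
          · exfalso
            rw [h01, modelA_conf01] at hmod
            exact conf01_ne_conf10 hmod.symm
          · exact h10
        · intro h10
          rw [h10, modelA_conf10]
          exact ⟨rfl, Or.inr rfl⟩
      have hnull : (μ.prod lam) (Tᶜ ×ˢ Set.univ) = 0 := by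
        rw [Measure.prod_prod, hTc, zero_mul]
      have hle : (μ.prod lam) S ≤ (μ.prod lam) ({conf10} ×ˢ Set.univ) := by
        calc (μ.prod lam) S ≤ (μ.prod lam) ((S ∩ T ×ˢ Set.univ) ∪ Tᶜ ×ˢ Set.univ) := by
              apply measure_mono
              intro p hp
              by_cases hpT : p.1 ∈ T
              · exact Or.inl ⟨hp, hpT, Set.mem_univ _⟩
              · exact Or.inr ⟨hpT, Set.mem_univ _⟩
          _ ≤ (μ.prod lam) (S ∩ T ×ˢ Set.univ) + (μ.prod lam) (Tᶜ ×ˢ Set.univ) :=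
              measure_union_le _ _
          _ = (μ.prod lam) ({conf10} ×ˢ Set.univ) := by rw [hclaim, hnull, add_zero]
      have hge : (μ.prod lam) ({conf10} ×ˢ Set.univ) ≤ (μ.prod lam) S := by
        apply measure_mono
        rw [← hclaim]
        exact Set.inter_subset_left
      have : (μ.prod lam) S = (μ.prod lam) ({conf10} ×ˢ Set.univ) := le_antisymm hle hge
      rw [h1, this, Measure.prod_prod, huniv, mul_one]
    have hsum : μ {conf01} + μ {conf10} = 1 := by
      rw [← hTfull, hT, Set.insert_eq,
        measure_union (by simp [Set.disjoint_singleton_left, conf01_ne_conf10])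
          (measurableSet_singleton conf10)]
    have ha : μ {conf01} = 1/2 := by
      rw [← hab, ← two_mul] at hsum
      rw [ENNReal.eq_div_iff two_ne_zero ENNReal.ofNat_ne_top]
      exact hsum
    have hb : μ {conf10} = 1/2 := hab ▸ ha
    -- conclude
    ext s hs
    have hsplit : μ s = μ (s ∩ {conf01}) + μ (s ∩ {conf10}) := by
      have h1 : μ (s ∩ T) + μ (s \ T) = μ s := measure_inter_add_diff s hTmeas
      have h2 : μ (s \ T) = 0 := measure_mono_null (Set.diff_subset_compl s T) hTc
      have h3 : s ∩ T = (s ∩ {conf01}) ∪ (s ∩ {conf10}) := by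
        rw [hT, Set.insert_eq, Set.inter_union_distrib_left]
      rw [← h1, h2, add_zero, h3,
        measure_union (Set.disjoint_left.mpr (fun x hx1 hx2 =>
            conf01_ne_conf10 ((Set.mem_singleton_iff.mp hx1.2).symm.trans
              (Set.mem_singleton_iff.mp hx2.2))))
          (hs.inter (measurableSet_singleton conf10))]
    have hval : ∀ (c : ℤ → Bool), μ {c} = 1/2 → μ (s ∩ {c}) =
        if c ∈ s then (1/2 : ENNReal) else 0 := by
      intro c hc
      by_cases hcs : c ∈ s
      · rw [Set.inter_eq_self_of_subset_right (by simpa using hcs), hc, if_pos hcs]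
      · rw [Set.inter_singleton_eq_empty.mpr hcs, measure_empty, if_neg hcs]
    rw [hsplit, hval conf01 ha, hval conf10 hb]
    simp only [Measure.smul_apply, Measure.coe_add, Pi.add_apply,
      Measure.dirac_apply' _ hs, smul_eq_mul]
    by_cases h1 : conf01 ∈ s <;> by_cases h2 : conf10 ∈ s <;>
      simp [h1, h2, Set.indicator, mul_add]
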